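/- arXiv:2209.09428 — 4 statements merged into one kernel-verified Lean document; each statement's English description precedes it below -/
import Mathlib

section
/- Let f : [0,∞) → ℝ be a twice continuously differentiable function satisfying f''(x) + f'(x) ≤ 1 and |f(x)| ≤ A for all x ≥ 0, where A > 1 is a fixed constant. Then f'(x) ≥ -5A for all x ≥ 0. -/
theorem stmt_0 (f : ℝ → ℝ) (A : ℝ) (hA : 1 < A)
    (hf : ContDiff ℝ 2 f)
    (hineq : ∀ x, 0 ≤ x → deriv (deriv f) x + deriv f x ≤ 1)
    (hbd : ∀ x, 0 ≤ x → |f x| ≤ A) :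
    ∀ x, 0 ≤ x → -5 * A ≤ deriv f x := by
  intro x hx
  by_contra hcon
  push_neg at hcon
  set c := deriv f x with hc
  have hf1 : Differentiable ℝ f := hf.differentiable (by norm_num)
  have hf2 : ContDiff ℝ 1 (deriv f) := by
    have := (contDiff_succ_iff_deriv (n := 1)).mp (by exact_mod_cast hf)
    exact this.2.2
  have hf2' : Differentiable ℝ (deriv f) := hf2.differentiable (by norm_num)
  -- g y = exp y * (deriv f y - 1) is antitone on Ici x
  set g : ℝ → ℝ := fun y => Real.exp y * (deriv f y - 1) with hg
  have hgderiv : ∀ y : ℝ, HasDerivAt g (Real.exp y * (deriv (deriv f) y + deriv f y - 1)) y := by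
    intro y
    have h1 : HasDerivAt (fun y => deriv f y - 1) (deriv (deriv f) y) y :=
      ((hf2'.differentiableAt).hasDerivAt).sub_const 1
    have := (Real.hasDerivAt_exp y).mul h1
    refine this.congr_deriv ?_
    ring
  have hganti : AntitoneOn g (Set.Ici x) := by
    apply antitoneOn_of_deriv_nonpos (convex_Ici x)
    · exact (Real.continuous_exp.mul ((hf2'.continuous).sub continuous_const)).continuousOn
    · intro y hy
      exact (hgderiv y).differentiableAt.differentiableWithinAt
    · intro y hy
      rw [interior_Ici] at hy
      rw [(hgderiv y).deriv]
      have : deriv (deriv f) y + deriv f y ≤ 1 := hineq y (le_of_lt (lt_of_le_of_lt hx hy))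
      nlinarith [Real.exp_pos y]
  have key : ∀ y ∈ Set.Ici x, deriv f y ≤ 1 + Real.exp (x - y) * (c - 1) := by
    intro y hy
    have := hganti (Set.self_mem_Ici) hy hy
    simp only [hg] at this
    have hey := Real.exp_pos y
    have : deriv f y - 1 ≤ Real.exp x * (c - 1) / Real.exp y := by
      rw [le_div_iff₀ hey]
      linarith [this]
    rw [Real.exp_sub]
    calc deriv f y ≤ 1 + Real.exp x * (c - 1) / Real.exp y := by linarith
    _ = 1 + Real.exp x / Real.exp y * (c - 1) := by ring
  -- h y = f y - y - (1-c) * exp (x - y) is antitone on Ici x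
  set h : ℝ → ℝ := fun y => f y - y - (1 - c) * Real.exp (x - y) with hh
  have hhderiv : ∀ y : ℝ, HasDerivAt h (deriv f y - 1 + (1 - c) * Real.exp (x - y)) y := by
    intro y
    have e1 : HasDerivAt (fun y : ℝ => x - y) (-1) y := by
      simpa using (hasDerivAt_id y).const_sub x
    have e2 : HasDerivAt (fun y => Real.exp (x - y)) (Real.exp (x - y) * (-1)) y :=
      (Real.hasDerivAt_exp _).comp y e1
    have := ((hf1.differentiableAt.hasDerivAt).sub (hasDerivAt_id y)).sub (e2.const_mul (1 - c))
    refine this.congr_deriv ?_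
    ring
  have hhanti : AntitoneOn h (Set.Ici x) := by
    apply antitoneOn_of_deriv_nonpos (convex_Ici x)
    · exact ((hf1.continuous.sub continuous_id).sub
        (continuous_const.mul (Real.continuous_exp.comp (continuous_const.sub continuous_id)))).continuousOn
    · intro y hy
      exact (hhderiv y).differentiableAt.differentiableWithinAt
    · intro y hy
      rw [interior_Ici] at hy
      rw [(hhderiv y).deriv]
      have := key y (Set.mem_Ici.mpr (le_of_lt hy))
      nlinarith [Real.exp_pos (x - y)]
  have hstep := hhanti (Set.self_mem_Ici) (by simp : x + 1 ∈ Set.Ici x) (by linarith)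
  simp only [hh] at hstep
  have hxx : Real.exp (x - x) = 1 := by simp
  have hxx1 : Real.exp (x - (x + 1)) = (Real.exp 1)⁻¹ := by
    rw [show x - (x+1) = -1 by ring, Real.exp_neg]
  rw [hxx, hxx1] at hstep
  -- bounds
  have hb1 := abs_le.mp (hbd x hx)
  have hb2 := abs_le.mp (hbd (x+1) (by linarith))
  have he : (2.7 : ℝ) < Real.exp 1 := by
    have := Real.exp_one_gt_d9
    linarith
  have he' : (Real.exp 1)⁻¹ < 0.38 := by
    rw [inv_lt_iff_one_lt_mul₀ (by positivity)]
    nlinarith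
  have hepos : (0:ℝ) < (Real.exp 1)⁻¹ := by positivity
  nlinarith [hb1.1, hb1.2, hb2.1, hb2.2]
end

section
/- Let φ : [0,∞) → [0,∞) be a non-increasing function, and suppose there exist constants C > 0 and δ > 0 such that r·φ(s + r) ≤ C·φ(s)^{1+δ} for all s ≥ 0 and all r > 0. Suppose moreover φ(s₀)^δ ≤ 1/(2C) for some s₀ ≥ 0. Then φ(s) = 0 for all s > s₀ + 1/(1 - 2^{-δ}). -/
theorem stmt_2 (φ : ℝ → ℝ) (C δ s₀ : ℝ) (hC : 0 < C) (hδ : 0 < δ)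
    (hnonneg : ∀ s, 0 ≤ s → 0 ≤ φ s)
    (hmono : AntitoneOn φ (Set.Ici 0))
    (hiter : ∀ s, 0 ≤ s → ∀ r, 0 < r → r * φ (s + r) ≤ C * φ s ^ (1 + δ))
    (hs₀ : 0 ≤ s₀) (hsmall : φ s₀ ^ δ ≤ 1 / (2 * C)) :
    ∀ s, s₀ + 1 / (1 - (2 : ℝ) ^ (-δ)) < s → φ s = 0 := by
  set x : ℝ := (2 : ℝ) ^ (-δ) with hxdef
  have hx0 : 0 < x := Real.rpow_pos_of_pos two_pos _
  have hx1 : x < 1 := Real.rpow_lt_one_of_one_lt_of_neg one_lt_two (neg_neg_of_pos hδ)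
  have h1x : 0 < 1 - x := by linarith
  -- sequence of levels
  set S : ℕ → ℝ := fun k => s₀ + ∑ i ∈ Finset.range k, x ^ i with hSdef
  have hSnn : ∀ k, 0 ≤ S k := by
    intro k
    have : 0 ≤ ∑ i ∈ Finset.range k, x ^ i :=
      Finset.sum_nonneg fun i _ => pow_nonneg hx0.le i
    simp only [hSdef]; linarith
  have hSlt : ∀ k, S k ≤ s₀ + 1 / (1 - x) := by
    intro k
    have := geom_sum_Ico_le_of_lt_one (m := 0) (n := k) hx0.le hx1
    simp only [pow_zero] at this
    rw [← Finset.range_eq_Ico] at this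
    simp only [hSdef]; linarith
  -- key induction
  have key : ∀ k, φ (S k) ≤ φ s₀ * (1 / 2) ^ k := by
    intro k
    induction k with
    | zero => simp [hSdef]
    | succ k ih =>
      have hSk : S (k + 1) = S k + x ^ k := by
        simp [hSdef, Finset.sum_range_succ, add_assoc]
      have hrpos : (0 : ℝ) < x ^ k := pow_pos hx0 k
      have hiter' := hiter (S k) (hSnn k) (x ^ k) hrpos
      rw [← hSk] at hiter'
      have hφk : 0 ≤ φ (S k) := hnonneg _ (hSnn k)
      have hφ0 : 0 ≤ φ s₀ := hnonneg _ hs₀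
      -- bound φ (S k) ^ δ
      have hbd : φ (S k) ^ δ ≤ φ s₀ ^ δ * x ^ k := by
        have h1 : φ (S k) ^ δ ≤ (φ s₀ * (1 / 2) ^ k) ^ δ :=
          Real.rpow_le_rpow hφk ih hδ.le
        have h2 : ((φ s₀ : ℝ) * (1 / 2) ^ k) ^ δ = φ s₀ ^ δ * ((1 / 2 : ℝ) ^ k) ^ δ :=
          Real.mul_rpow hφ0 (by positivity)
      -- ((1/2)^k)^δ = x^k
        have h3 : (((1 / 2 : ℝ)) ^ k) ^ δ = x ^ k := by
          have e1 : ((1 / 2 : ℝ)) ^ k = (2 : ℝ) ^ (-(k : ℝ)) := by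
            rw [Real.rpow_neg (by norm_num), Real.rpow_natCast]
            simp [div_pow]
          have e2 : x ^ k = (2 : ℝ) ^ (-δ * (k : ℝ)) := by
            rw [hxdef, ← Real.rpow_natCast ((2:ℝ) ^ (-δ)) k,
              ← Real.rpow_mul (by norm_num : (0:ℝ) ≤ 2)]
          rw [e1, ← Real.rpow_mul (by norm_num : (0:ℝ) ≤ 2), e2]
          congr 1
          ring
        calc φ (S k) ^ δ ≤ (φ s₀ * (1 / 2) ^ k) ^ δ := h1
          _ = φ s₀ ^ δ * x ^ k := by rw [h2, h3]
      have hsplit : φ (S k) ^ (1 + δ) = φ (S k) * φ (S k) ^ δ := by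
        rw [Real.rpow_add' hφk (by positivity), Real.rpow_one]
      have hchain : x ^ k * φ (S (k + 1)) ≤ (φ (S k) / 2) * x ^ k := by
        calc x ^ k * φ (S (k + 1)) ≤ C * φ (S k) ^ (1 + δ) := hiter'
          _ = C * (φ (S k) * φ (S k) ^ δ) := by rw [hsplit]
          _ ≤ C * (φ (S k) * (φ s₀ ^ δ * x ^ k)) := by
              apply mul_le_mul_of_nonneg_left _ hC.le
              exact mul_le_mul_of_nonneg_left hbd hφk
          _ ≤ C * (φ (S k) * (1 / (2 * C) * x ^ k)) := by
              apply mul_le_mul_of_nonneg_left _ hC.le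
              apply mul_le_mul_of_nonneg_left _ hφk
              exact mul_le_mul_of_nonneg_right hsmall hrpos.le
          _ = (φ (S k) / 2) * x ^ k := by field_simp
      have hstep : φ (S (k + 1)) ≤ φ (S k) / 2 := by
        have h := hchain
        rw [mul_comm (x ^ k)] at h
        exact le_of_mul_le_mul_right h hrpos
      calc φ (S (k + 1)) ≤ φ (S k) / 2 := hstep
        _ ≤ (φ s₀ * (1 / 2) ^ k) / 2 := by linarith
        _ = φ s₀ * (1 / 2) ^ (k + 1) := by ring
  -- conclusion
  intro s hs
  have hs0 : 0 ≤ s := le_trans (by positivity) (le_of_lt (lt_of_le_of_lt (by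
    have : 0 < 1 / (1 - x) := by positivity
    linarith [hs₀] : s₀ ≤ s₀ + 1 / (1 - x)) hs))
  have hφs : ∀ k, φ s ≤ φ s₀ * (1 / 2) ^ k := by
    intro k
    have hle : S k ≤ s := le_of_lt (lt_of_le_of_lt (hSlt k) hs)
    exact le_trans (hmono (hSnn k) hs0 hle) (key k)
  have htend : Filter.Tendsto (fun k : ℕ => φ s₀ * (1 / 2) ^ k) Filter.atTop (nhds 0) := by
    have := tendsto_pow_atTop_nhds_zero_of_lt_one (by norm_num : (0:ℝ) ≤ 1/2)
      (by norm_num : (1/2 : ℝ) < 1)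
    simpa using this.const_mul (φ s₀)
  have hle0 : φ s ≤ 0 := ge_of_tendsto htend (Filter.Eventually.of_forall hφs)
  exact le_antisymm hle0 (hnonneg s hs0)
end

section
/- Let φ : [0,∞) → [0,∞) be non-increasing with φ(s) ≤ 1/s for all s > 0, and suppose r·φ(s + r) ≤ C·φ(s)^{1+δ} for all s ≥ 0, r > 0, with C, δ > 0. Then φ(s) = 0 for all s > (2C)^{1/δ} + 1/(1 - 2^{-δ}). -/
theorem stmt_3 (φ : ℝ → ℝ) (C δ : ℝ) (hC : 0 < C) (hδ : 0 < δ)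
    (hnonneg : ∀ s, 0 ≤ s → 0 ≤ φ s)
    (hmono : AntitoneOn φ (Set.Ici 0))
    (hdecay : ∀ s : ℝ, 0 < s → φ s ≤ 1 / s)
    (hiter : ∀ s, 0 ≤ s → ∀ r, 0 < r → r * φ (s + r) ≤ C * φ s ^ (1 + δ)) :
    ∀ s, (2 * C) ^ (1 / δ) + 1 / (1 - (2 : ℝ) ^ (-δ)) < s → φ s = 0 := by
  intro s hs
  have h2C : (0:ℝ) < 2 * C := by linarith
  set B : ℝ := (2 * C) ^ (1 / δ) with hB
  have hB0 : 0 < B := Real.rpow_pos_of_pos h2C _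
  set q : ℝ := (2:ℝ) ^ (-δ) with hq
  have hq0 : 0 < q := Real.rpow_pos_of_pos two_pos _
  have hq1 : q < 1 := Real.rpow_lt_one_of_one_lt_of_neg one_lt_two (by linarith)
  set A : ℝ := B⁻¹ with hA
  have hA0 : 0 < A := inv_pos.2 hB0
  have hBδ : B ^ δ = 2 * C := by
    rw [hB, ← Real.rpow_mul h2C.le, one_div_mul_cancel hδ.ne', Real.rpow_one]
  have hAδ : A ^ δ = (2 * C)⁻¹ := by
    rw [hA, ← Real.rpow_neg_one B, ← Real.rpow_mul hB0.le]
    rw [show (-1 : ℝ) * δ = -δ by ring, Real.rpow_neg hB0.le, hBδ]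
  -- C * A ^ (1 + δ) = A / 2
  have hkeyA : C * A ^ (1 + δ) = A / 2 := by
    rw [Real.rpow_add hA0, Real.rpow_one, hAδ]
    field_simp
  -- half = (1/2 : ℝ)
  have hhalf : ((1:ℝ)/2) ^ δ = q := by
    rw [hq, one_div, ← Real.rpow_neg_one (2:ℝ), ← Real.rpow_mul (by norm_num : (0:ℝ) ≤ 2)]
    norm_num
  -- the sequence
  set S : ℕ → ℝ := fun n => B + ∑ k ∈ Finset.range n, q ^ k with hS
  have hSpos : ∀ n, 0 < S n := by
    intro n
    have : (0:ℝ) ≤ ∑ k ∈ Finset.range n, q ^ k :=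
      Finset.sum_nonneg fun k _ => (pow_pos hq0 k).le
    simp only [hS]; linarith
  have hSsucc : ∀ n, S (n + 1) = S n + q ^ n := by
    intro n; simp only [hS, Finset.sum_range_succ]; ring
  have hSlt : ∀ n, S n ≤ s := by
    intro n
    have hq1' : (0:ℝ) < 1 - q := by linarith
    have hsum : ∑ k ∈ Finset.range n, q ^ k = (1 - q ^ n) / (1 - q) := by
      rw [geom_sum_eq hq1.ne, ← neg_sub (1:ℝ) (q ^ n), ← neg_sub (1:ℝ) q, neg_div_neg_eq]
    have hle : (1 - q ^ n) / (1 - q) ≤ 1 / (1 - q) := by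
      gcongr
      linarith [(pow_pos hq0 n).le]
    have : S n ≤ B + 1 / (1 - q) := by
      simp only [hS, hsum]; linarith
    exact this.trans hs.le
  -- main induction
  have key : ∀ n, φ (S n) ≤ A * (1/2) ^ n := by
    intro n
    induction n with
    | zero =>
      simpa [hS, hA, one_div] using hdecay B hB0
    | succ n ih =>
      have hφn : 0 ≤ φ (S n) := hnonneg _ (hSpos n).le
      have h1 := hiter (S n) (hSpos n).le (q ^ n) (pow_pos hq0 n)
      rw [← hSsucc n] at h1
      have h2 : φ (S n) ^ (1 + δ) ≤ (A * (1/2) ^ n) ^ (1 + δ) :=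
        Real.rpow_le_rpow hφn ih (by linarith)
      have h3 : (A * (1/2) ^ n) ^ (1 + δ)
          = A ^ (1 + δ) * ((1/2:ℝ) ^ n * q ^ n) := by
        rw [Real.mul_rpow hA0.le (by positivity)]
        congr 1
        rw [← Real.rpow_natCast ((1:ℝ)/2) n, ← Real.rpow_mul (by norm_num)]
        rw [show (n:ℝ) * (1 + δ) = n + n * δ by ring,
          Real.rpow_add (by norm_num), Real.rpow_natCast]
        congr 1
        rw [show (n:ℝ) * δ = δ * n by ring, Real.rpow_mul (by norm_num : (0:ℝ) ≤ 1/2) δ n,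
          hhalf, Real.rpow_natCast]
      have h4 : q ^ n * φ (S (n + 1)) ≤ (A / 2) * ((1/2:ℝ) ^ n * q ^ n) := by
        calc q ^ n * φ (S (n + 1)) ≤ C * φ (S n) ^ (1 + δ) := h1
        _ ≤ C * (A * (1/2) ^ n) ^ (1 + δ) := by
            apply mul_le_mul_of_nonneg_left h2 hC.le
        _ = (A / 2) * ((1/2:ℝ) ^ n * q ^ n) := by rw [h3, ← mul_assoc, hkeyA]
      have hqn : (0:ℝ) < q ^ n := pow_pos hq0 n
      have := (mul_le_mul_iff_right₀ hqn).mp (by linarith [h4] : q ^ n * φ (S (n+1)) ≤ q ^ n * ((A/2) * (1/2)^n))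
      calc φ (S (n+1)) ≤ (A / 2) * (1/2) ^ n := this
      _ = A * (1/2) ^ (n+1) := by ring
  -- conclude
  have hs0 : 0 ≤ s := le_of_lt ((hSpos 0).trans_le (hSlt 0))
  have hbound : ∀ n, φ s ≤ A * (1/2) ^ n := by
    intro n
    exact (hmono (Set.mem_Ici.2 (hSpos n).le) (Set.mem_Ici.2 hs0) (hSlt n)).trans (key n)
  have htend : Filter.Tendsto (fun n : ℕ => A * (1/2:ℝ) ^ n) Filter.atTop (nhds 0) := by
    have := tendsto_pow_atTop_nhds_zero_of_lt_one (by norm_num : (0:ℝ) ≤ 1/2) (by norm_num)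
    simpa using this.const_mul A
  have hle0 : φ s ≤ 0 := ge_of_tendsto htend (Filter.Eventually.of_forall hbound)
  exact le_antisymm hle0 (hnonneg s hs0)
end

section
/- Let (X,g) be a compact connected Riemannian manifold with volume V, and suppose its Green's function satisfies ∫_X |∇_y G(x,y)| dV(y) ≤ C for all x ∈ X. Then diam(X,g) ≤ 2C. -/
open MeasureTheory

theorem stmt_10 {X : Type*} [MetricSpace X] [MeasurableSpace X]
    (μ : Measure X) [IsFiniteMeasure μ] (V C : ℝ)
    (hV : V = (μ Set.univ).toReal) (hVpos : 0 < V) (hC : 0 < C)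
    (gnorm : X → X → ℝ)
    (hrep : ∀ (x : X) (f : X → ℝ), LipschitzWith 1 f →
      |f x - (1 / V) * ∫ y, f y ∂μ| ≤ ∫ y, gnorm x y ∂μ)
    (hG : ∀ x, ∫ y, gnorm x y ∂μ ≤ C) :
    Metric.diam (Set.univ : Set X) ≤ 2 * C := by
  apply Metric.diam_le_of_forall_dist_le (by positivity)
  intro x _ y _
  have hf : LipschitzWith 1 (dist x) := LipschitzWith.dist_right x
  have h1 := abs_le.mp ((hrep x (dist x) hf).trans (hG x))
  have h2 := abs_le.mp ((hrep y (dist x) hf).trans (hG y))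
  have e1 : dist x x = 0 := dist_self x
  rw [e1] at h1
  linarith [h1.1, h2.2]
end
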